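/- Let b > 0, κ > 0 and l < 0 < h be real numbers and let d ∈ L²(μ). The following are equivalent: (a) there exists λ ∈ L²(μ) with −1 ≤ λ(x) ≤ 1 for μ-a.e. x such that ∫ (d + κ·λ)·u dμ ≥ 0 for every u ∈ U_ad (i.e. the zero control u* = 0 satisfies the first-order variational inequality with multiplier λ); (b) |d(x)| ≤ κ for μ-a.e. x. Moreover, if (a) holds, then necessarily d + κ·λ = 0 μ-a.e. (Content of Remark 3.5: when the zero control satisfies the first-order conditions, the variational inequality forces d + κλ = 0 a.e.) -/

import Mathlib

open MeasureTheory

private lemma measurable_realSign : Measurable Real.sign := by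
  have : Real.sign = fun r : ℝ => if r < 0 then (-1 : ℝ) else if 0 < r then 1 else 0 :=
    funext fun r => rfl
  rw [this]
  exact Measurable.ite (measurableSet_lt measurable_id measurable_const)
    measurable_const (Measurable.ite (measurableSet_lt measurable_const measurable_id)
      measurable_const measurable_const)

private lemma mul_sign (x : ℝ) : x * Real.sign x = |x| := by
  rcases lt_trichotomy x 0 with hx | hx | hx
  · rw [Real.sign_of_neg hx, abs_of_neg hx]; ring
  · simp [hx]
  · rw [Real.sign_of_pos hx, abs_of_pos hx]; ring

/-- Key lemma: if `g ∈ L²` satisfies the variational inequality against all controls valued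
in `[l, h]` with `l < 0 < h`, then `g = 0` a.e. -/
private lemma key_lemma {X : Type*} [MeasurableSpace X] (μ : Measure X) [IsFiniteMeasure μ]
    (l h : ℝ) (hl : l < 0) (hh : 0 < h) (g : Lp ℝ 2 μ)
    (H : ∀ u : Lp ℝ 2 μ, (∀ᵐ x ∂μ, u x ∈ Set.Icc l h) → 0 ≤ ∫ x, g x * u x ∂μ) :
    ∀ᵐ x ∂μ, g x = 0 := by
  set c : ℝ := min h (-l) with hc_def
  have hc : 0 < c := lt_min hh (neg_pos.mpr hl)
  have hgm := Lp.aestronglyMeasurable g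
  have hum : AEStronglyMeasurable (fun x => -c * Real.sign (g x)) μ :=
    ((measurable_realSign.comp_aemeasurable hgm.aemeasurable).aestronglyMeasurable).const_mul
      (-c)
  have hmem : MemLp (fun x => -c * Real.sign (g x)) 2 μ := by
    refine MemLp.of_bound hum c ?_
    filter_upwards with x
    rcases Real.sign_apply_eq (g x) with hs | hs | hs <;>
      simp [hs, abs_of_pos hc, hc.le, Real.norm_eq_abs, abs_mul, abs_of_neg, neg_neg]
  set u : Lp ℝ 2 μ := hmem.toLp _ with hu_def
  have hu_ae : (u : X → ℝ) =ᵐ[μ] fun x => -c * Real.sign (g x) := hmem.coeFn_toLp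
  have hu_adm : ∀ᵐ x ∂μ, u x ∈ Set.Icc l h := by
    filter_upwards [hu_ae] with x hx
    rw [hx]
    have h1 : c ≤ h := min_le_left _ _
    have h2 : c ≤ -l := min_le_right _ _
    rcases Real.sign_apply_eq (g x) with hs | hs | hs <;> rw [hs] <;> constructor <;> nlinarith
  have hpos := H u hu_adm
  have hint : Integrable (fun x => g x) μ := (Lp.memLp g).integrable (by norm_num)
  have heq : ∫ x, g x * u x ∂μ = -c * ∫ x, |g x| ∂μ := by
    rw [← integral_const_mul]
    refine integral_congr_ae ?_
    filter_upwards [hu_ae] with x hx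
    rw [hx, ← mul_sign (g x)]; ring
  rw [heq] at hpos
  have hI : ∫ x, |g x| ∂μ ≤ 0 := by nlinarith [hpos]
  have hInn : 0 ≤ ∫ x, |g x| ∂μ := integral_nonneg fun x => abs_nonneg _
  have hI0 : ∫ x, |g x| ∂μ = 0 := le_antisymm hI hInn
  have := (integral_eq_zero_iff_of_nonneg_ae
    (Filter.Eventually.of_forall fun x => abs_nonneg (g x)) hint.abs).mp hI0
  filter_upwards [this] with x hx
  exact abs_eq_zero.mp hx

/-- Content of Remark 3.5: with `b, κ > 0` and `l < 0 < h`, the zero control satisfies the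
first-order variational inequality with some multiplier `λ` taking values in `[-1, 1]` a.e.
if and only if `|d| ≤ κ` a.e.; moreover, any such multiplier necessarily satisfies
`d + κ λ = 0` a.e. -/
theorem zero_control_first_order_iff
    {X : Type*} [MeasurableSpace X] (μ : Measure X) [IsFiniteMeasure μ]
    (b κ l h : ℝ) (hb : 0 < b) (hκ : 0 < κ) (hl : l < 0) (hh : 0 < h)
    (d : Lp ℝ 2 μ) :
    ((∃ lam : Lp ℝ 2 μ, (∀ᵐ x ∂μ, lam x ∈ Set.Icc (-1 : ℝ) 1) ∧
        ∀ u : Lp ℝ 2 μ, (∀ᵐ x ∂μ, u x ∈ Set.Icc l h) →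
          0 ≤ ∫ x, (d x + κ * lam x) * u x ∂μ) ↔
      (∀ᵐ x ∂μ, |d x| ≤ κ)) ∧
    (∀ lam : Lp ℝ 2 μ, (∀ᵐ x ∂μ, lam x ∈ Set.Icc (-1 : ℝ) 1) →
      (∀ u : Lp ℝ 2 μ, (∀ᵐ x ∂μ, u x ∈ Set.Icc l h) →
        0 ≤ ∫ x, (d x + κ * lam x) * u x ∂μ) →
      ∀ᵐ x ∂μ, d x + κ * lam x = 0) := by
  -- the "moreover" part
  have main : ∀ lam : Lp ℝ 2 μ,
      (∀ u : Lp ℝ 2 μ, (∀ᵐ x ∂μ, u x ∈ Set.Icc l h) →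
        0 ≤ ∫ x, (d x + κ * lam x) * u x ∂μ) →
      ∀ᵐ x ∂μ, d x + κ * lam x = 0 := by
    intro lam H
    set g : Lp ℝ 2 μ := d + κ • lam with hg_def
    have hg_ae : (g : X → ℝ) =ᵐ[μ] fun x => d x + κ * lam x := by
      filter_upwards [Lp.coeFn_add d (κ • lam), Lp.coeFn_smul κ lam] with x h1 h2
      simp only [hg_def, h1, Pi.add_apply, h2, Pi.smul_apply, smul_eq_mul]
    have hg0 : ∀ᵐ x ∂μ, g x = 0 := by
      apply key_lemma μ l h hl hh g
      intro u hu
      have : ∫ x, g x * u x ∂μ = ∫ x, (d x + κ * lam x) * u x ∂μ := by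
        refine integral_congr_ae ?_
        filter_upwards [hg_ae] with x hx
        rw [hx]
      rw [this]
      exact H u hu
    filter_upwards [hg0, hg_ae] with x h1 h2
    rw [← h2]; exact h1
  refine ⟨⟨?_, ?_⟩, fun lam _ H => main lam H⟩
  · rintro ⟨lam, hlam, H⟩
    filter_upwards [main lam H, hlam] with x h1 h2
    have : d x = -(κ * lam x) := by linarith
    rw [this, abs_neg, abs_mul, abs_of_pos hκ]
    have : |lam x| ≤ 1 := abs_le.mpr ⟨h2.1, h2.2⟩
    nlinarith
  · intro hd
    refine ⟨(-κ⁻¹) • d, ?_, ?_⟩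
    · filter_upwards [Lp.coeFn_smul (-κ⁻¹) d, hd] with x h1 h2
      rw [h1]
      simp only [Pi.smul_apply, smul_eq_mul]
      have hκ' : (0:ℝ) < κ⁻¹ := inv_pos.mpr hκ
      have habs : |(-κ⁻¹ : ℝ) * d x| ≤ 1 := by
        rw [abs_mul, abs_neg, abs_of_pos hκ']
        calc κ⁻¹ * |d x| ≤ κ⁻¹ * κ := mul_le_mul_of_nonneg_left h2 hκ'.le
        _ = 1 := inv_mul_cancel₀ hκ.ne'
      exact Set.mem_Icc.mpr (abs_le.mp habs)
    · intro u hu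
      have : ∫ x, (d x + κ * ((-κ⁻¹) • d) x) * u x ∂μ = ∫ x, (0:ℝ) ∂μ := by
        refine integral_congr_ae ?_
        filter_upwards [Lp.coeFn_smul (-κ⁻¹) d] with x hx
        rw [hx]
        simp only [Pi.smul_apply, smul_eq_mul]
        have : κ * (-κ⁻¹ * d x) = -(d x) := by
          rw [neg_mul, mul_neg, ← mul_assoc, mul_inv_cancel₀ hκ.ne', one_mul]
        rw [this]; ring
      rw [this, integral_zero]
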